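/- Representability in F_{p,q}: let x = n × 2^m with n ∈ ℕ, m ∈ ℤ, and set c_x = max{0, e_min − m} where e_min = −2^{q−1} + 2. If 0 < n < 2^{1+p−c_x} and −p + e_min ≤ m ≤ −p + e_max with e_max = 2^{q−1} − 1, then x ∈ F_{p,q}. -/

import Mathlib

/-- The minimal exponent `e_min = -2^(q-1) + 2` of `F_{p,q}`. -/
def eMin (q : ℕ) : ℤ := -(2 : ℤ) ^ (q - 1) + 2

/-- The maximal exponent `e_max = 2^(q-1) - 1` of `F_{p,q}`. -/
def eMax (q : ℕ) : ℤ := (2 : ℤ) ^ (q - 1) - 1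

/-- `F_{p,q}`: floating-point numbers with `p`-bit significand fraction and
`q`-bit exponent: reals of the form `±m·2^(e-p)` with `0 ≤ m < 2^(p+1)`,
`e_min ≤ e ≤ e_max`, where `m < 2^p` (subnormals) is only allowed at
`e = e_min`; this includes `0`. -/
def Fpq (p q : ℕ) : Set ℝ :=
  {x | ∃ (s : ℤ) (m : ℕ) (e : ℤ), (s = 1 ∨ s = -1) ∧
    m < 2 ^ (p + 1) ∧ eMin q ≤ e ∧ e ≤ eMax q ∧ (2 ^ p ≤ m ∨ e = eMin q) ∧
    x = (s : ℝ) * m * (2 : ℝ) ^ (e - (p : ℤ))}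

/-- Representability in `F_{p,q}`: if `x = n·2^m` with `n ∈ ℕ`, `m ∈ ℤ`,
`c_x = max{0, e_min - m}`, `0 < n < 2^(1+p-c_x)`, and
`-p + e_min ≤ m ≤ -p + e_max`, then `x ∈ F_{p,q}`. -/
theorem representable_Fpq (p q : ℕ) (n : ℕ) (m : ℤ)
    (h0 : 0 < n)
    (h1 : (n : ℝ) < (2 : ℝ) ^ (1 + (p : ℤ) - max 0 (eMin q - m)))
    (h2 : -(p : ℤ) + eMin q ≤ m) (h3 : m ≤ -(p : ℤ) + eMax q) :
    (n : ℝ) * (2 : ℝ) ^ m ∈ Fpq p q := by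
  have hnZ : n ≠ 0 := h0.ne'
  set L : ℕ := Nat.log 2 n with hL
  -- n < 2^(p+1) in ℕ
  have hnlt : n < 2 ^ (p + 1) := by
    have hle : (1 + (p : ℤ) - max 0 (eMin q - m)) ≤ (p : ℤ) + 1 := by
      have := le_max_left (0 : ℤ) (eMin q - m); omega
    have : (n : ℝ) < (2 : ℝ) ^ ((p : ℤ) + 1) :=
      lt_of_lt_of_le h1 (zpow_le_zpow_right₀ one_le_two hle)
    have h2p : ((2 : ℝ) ^ ((p : ℤ) + 1)) = ((2 ^ (p + 1) : ℕ) : ℝ) := by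
      push_cast; rw [zpow_add_one₀ (by norm_num), zpow_natCast]; ring
    rw [h2p] at this
    exact_mod_cast this
  have hLp : L ≤ p := by
    exact Nat.lt_succ_iff.mp (Nat.log_lt_of_lt_pow hnZ hnlt)
  have h2L : 2 ^ L ≤ n := Nat.pow_log_le_self 2 hnZ
  have hnL : n < 2 ^ (L + 1) := Nat.lt_pow_succ_log_self one_lt_two n
  rcases le_or_gt (eMin q) ((L : ℤ) + m) with hcase | hcase
  · -- normal case: e = L + m
    refine ⟨1, n * 2 ^ (p - L), (L : ℤ) + m, Or.inl rfl, ?_, hcase, ?_, Or.inl ?_, ?_⟩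
    · calc n * 2 ^ (p - L) < 2 ^ (L + 1) * 2 ^ (p - L) := by
            exact Nat.mul_lt_mul_of_lt_of_le hnL (le_refl _) (Nat.pow_pos (by norm_num))
        _ = 2 ^ (p + 1) := by rw [← pow_add]; congr 1; omega
    · have : (L : ℤ) ≤ p := by exact_mod_cast hLp
      omega
    · calc 2 ^ p = 2 ^ L * 2 ^ (p - L) := by rw [← pow_add]; congr 1; omega
        _ ≤ n * 2 ^ (p - L) := Nat.mul_le_mul_right _ h2L
    · push_cast
      rw [one_mul, mul_assoc, ← zpow_natCast (2:ℝ) (p - L),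
        ← zpow_add₀ (by norm_num : (2:ℝ) ≠ 0)]
      congr 2
      omega
  · -- subnormal case: e = eMin q
    have ht0 : 0 ≤ m + (p : ℤ) - eMin q := by omega
    set t : ℕ := (m + (p : ℤ) - eMin q).toNat with htdef
    have ht : (t : ℤ) = m + (p : ℤ) - eMin q := Int.toNat_of_nonneg ht0
    have hLt : L + 1 + t ≤ p + 1 := by omega
    refine ⟨1, n * 2 ^ t, eMin q, Or.inl rfl, ?_, le_refl _, by omega, Or.inr rfl, ?_⟩
    · calc n * 2 ^ t < 2 ^ (L + 1) * 2 ^ t := by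
            exact Nat.mul_lt_mul_of_lt_of_le hnL (le_refl _) (Nat.pow_pos (by norm_num))
        _ = 2 ^ (L + 1 + t) := by rw [← pow_add]
        _ ≤ 2 ^ (p + 1) := Nat.pow_le_pow_right (by norm_num) hLt
    · push_cast
      rw [one_mul, mul_assoc, ← zpow_natCast (2:ℝ) t,
        ← zpow_add₀ (by norm_num : (2:ℝ) ≠ 0)]
      congr 2
      omega
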